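/- Let R be a commutative ring, s ≥ 1, y ∈ R, and u_1, ..., u_{s-1} units in R with δ = ∏_{i=1}^{s-1} u_i. Let U be the s×s matrix with U_{i,i} = 1+y, U_{i,j} = (∏_{k=i}^{j-1} u_k) y for i < j, and U_{i,j} = (∏_{k=j}^{i-1} u_k)^{-1} for i > j. Then there exist invertible s×s matrices P and Q over R with det P = (-1)^{s-1} and det Q = 1 such that P·U·Q is the diagonal matrix diag(-u_1, ..., -u_{s-1}, δ^{-1} ∑_{j=0}^{s} y^j). -/

import Mathlib

open Finset Matrix

namespace UMDF

variable {R : Type*} [CommRing R]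

def vv (u : ℕ → Rˣ) (i : ℕ) : Rˣ := ∏ k ∈ Finset.Ico 1 (i + 1), u k

def mf (y : R) (i j : ℕ) : R := if i = j then 1 + y else if i < j then y else 1

def p0f (i j : ℕ) : R := if j = i then 1 else if j = i + 1 then -1 else 0

def ef (n : ℕ) (y : R) (i j : ℕ) : R :=
  if j = i then 1 else if i = n ∧ j < n then ∑ m ∈ range (n + 1 - j), y ^ m else 0

def qf (y : R) (i j : ℕ) : R := if j ≤ i then y ^ (i - j) else 0

def pcf (n i j : ℕ) : R := if i = (j + 1) % (n + 1) then 1 else 0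

def af (n : ℕ) (y : R) (i j : ℕ) : R :=
  if i < n then (if j = i then y else if j = i + 1 then -1 else 0)
  else if j = n then 1 + y else 1

def bf (n : ℕ) (y : R) (i j : ℕ) : R :=
  if i < n then (if j = i + 1 then -1 else 0) else ∑ m ∈ range (n + 1 + 1 - j), y ^ m

def cf (n : ℕ) (y : R) (i j : ℕ) : R :=
  if i < n then (if j = i + 1 then -1 else 0)
  else if j = 0 then ∑ m ∈ range (n + 1 + 1), y ^ m else 0

def Mm (n : ℕ) (y : R) : Matrix (Fin (n + 1)) (Fin (n + 1)) R :=
  Matrix.of fun i j => mf y i.val j.val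

def P0 (n : ℕ) : Matrix (Fin (n + 1)) (Fin (n + 1)) R :=
  Matrix.of fun i j => p0f i.val j.val

def Em (n : ℕ) (y : R) : Matrix (Fin (n + 1)) (Fin (n + 1)) R :=
  Matrix.of fun i j => ef n y i.val j.val

def Qm (n : ℕ) (y : R) : Matrix (Fin (n + 1)) (Fin (n + 1)) R :=
  Matrix.of fun i j => qf y i.val j.val

def Pc (n : ℕ) : Matrix (Fin (n + 1)) (Fin (n + 1)) R :=
  Matrix.of fun i j => pcf n i.val j.val

def Am (n : ℕ) (y : R) : Matrix (Fin (n + 1)) (Fin (n + 1)) R :=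
  Matrix.of fun i j => af n y i.val j.val

def Bm (n : ℕ) (y : R) : Matrix (Fin (n + 1)) (Fin (n + 1)) R :=
  Matrix.of fun i j => bf n y i.val j.val

def Cm (n : ℕ) (y : R) : Matrix (Fin (n + 1)) (Fin (n + 1)) R :=
  Matrix.of fun i j => cf n y i.val j.val

def Dm (n : ℕ) (u : ℕ → Rˣ) : Matrix (Fin (n + 1)) (Fin (n + 1)) R :=
  Matrix.diagonal fun i => (vv u i.val : R)

def Dm' (n : ℕ) (u : ℕ → Rˣ) : Matrix (Fin (n + 1)) (Fin (n + 1)) R :=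
  Matrix.diagonal fun i => (((vv u i.val)⁻¹ : Rˣ) : R)

def Fm (n : ℕ) (u : ℕ → Rˣ) : Matrix (Fin (n + 1)) (Fin (n + 1)) R :=
  Matrix.diagonal fun i => if i.val < n then (u (i.val + 1) : R) else (((vv u n)⁻¹ : Rˣ) : R)

def Sm (n : ℕ) (c : R) : Matrix (Fin (n + 1)) (Fin (n + 1)) R :=
  Matrix.diagonal fun i => if i.val = 0 then c else 1

def Dl (n : ℕ) (y : R) : Matrix (Fin (n + 1)) (Fin (n + 1)) R :=
  Matrix.diagonal fun i => if i.val < n then (-1 : R) else ∑ m ∈ range (n + 1 + 1), y ^ m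

lemma P0_mul_Mm (n : ℕ) (y : R) : P0 n * Mm n y = Am n y := by
  ext i j
  have hi := i.isLt
  have hj := j.isLt
  rw [Matrix.mul_apply]
  unfold P0 Mm Am
  simp only [Matrix.of_apply]
  rw [Fin.sum_univ_eq_sum_range (fun k => p0f (i : ℕ) k * mf y k (j : ℕ)) (n + 1)]
  have step : ∀ k ∈ range (n + 1), p0f (i : ℕ) k * mf y k (j : ℕ)
      = (if k = (i : ℕ) then mf y k (j : ℕ) else 0)
        + (if k = (i : ℕ) + 1 then -(mf y k (j : ℕ)) else 0) := by
    intro k _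
    unfold p0f
    split_ifs <;> first | ring1 | (exfalso; omega)
  rw [Finset.sum_congr rfl step, Finset.sum_add_distrib,
      Finset.sum_ite_eq' (range (n + 1)) (i : ℕ) (fun k => mf y k (j : ℕ)),
      Finset.sum_ite_eq' (range (n + 1)) ((i : ℕ) + 1) (fun k => -(mf y k (j : ℕ)))]
  simp only [Finset.mem_range]
  unfold mf af
  split_ifs <;> first | ring1 | (exfalso; omega)



lemma Am_mul_Qm (n : ℕ) (y : R) : Am n y * Qm n y = Bm n y := by
  ext i j
  have hi := i.isLt
  have hj := j.isLt
  rw [Matrix.mul_apply]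
  unfold Am Qm Bm
  simp only [Matrix.of_apply]
  rw [Fin.sum_univ_eq_sum_range (fun k => af n y (i : ℕ) k * qf y k (j : ℕ)) (n + 1)]
  rcases Nat.lt_or_ge (i : ℕ) n with hin | hin
  · have step : ∀ k ∈ range (n + 1), af n y (i : ℕ) k * qf y k (j : ℕ)
        = (if k = (i : ℕ) then y * qf y k (j : ℕ) else 0)
          + (if k = (i : ℕ) + 1 then -(qf y k (j : ℕ)) else 0) := by
      intro k _
      unfold af
      split_ifs <;> first | ring1 | (exfalso; omega)
    rw [Finset.sum_congr rfl step, Finset.sum_add_distrib,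
        Finset.sum_ite_eq' (range (n + 1)) (i : ℕ) (fun k => y * qf y k (j : ℕ)),
        Finset.sum_ite_eq' (range (n + 1)) ((i : ℕ) + 1) (fun k => -(qf y k (j : ℕ)))]
    simp only [Finset.mem_range]
    rw [if_pos (by omega), if_pos (by omega)]
    unfold qf bf
    rw [if_pos hin]
    rcases Nat.lt_trichotomy (j : ℕ) ((i : ℕ) + 1) with h | h | h
    · rw [if_pos (by omega : (j : ℕ) ≤ (i : ℕ)), if_pos (by omega), if_neg (by omega)]
      have he : (i : ℕ) + 1 - (j : ℕ) = ((i : ℕ) - (j : ℕ)) + 1 := by omega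
      rw [he, pow_succ]
      ring
    · rw [if_neg (by omega), if_pos (by omega), if_pos (by omega)]
      have he : (i : ℕ) + 1 - (j : ℕ) = 0 := by omega
      rw [he, pow_zero]
      ring
    · rw [if_neg (by omega), if_neg (by omega), if_neg (by omega)]
      ring
  · have step : ∀ k ∈ range (n + 1), af n y (i : ℕ) k * qf y k (j : ℕ)
        = (if (j : ℕ) ≤ k then y ^ (k - (j : ℕ)) else 0)
          + (if k = n then y * y ^ (n - (j : ℕ)) else 0) := by
      intro k hk
      rw [Finset.mem_range] at hk
      unfold af qf
      split_ifs <;> first | ring1 | (exfalso; omega) | (subst_vars; ring1)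
    rw [Finset.sum_congr rfl step, Finset.sum_add_distrib,
        Finset.sum_ite_eq' (range (n + 1)) n (fun _ => y * y ^ (n - (j : ℕ))),
        if_pos (Finset.self_mem_range_succ n)]
    have hfil : (range (n + 1)).filter (fun k => (j : ℕ) ≤ k) = Finset.Ico (j : ℕ) (n + 1) := by
      ext k
      simp only [Finset.mem_filter, Finset.mem_range, Finset.mem_Ico]
      omega
    rw [← Finset.sum_filter, hfil, Finset.sum_Ico_eq_sum_range]
    simp only [Nat.add_sub_cancel_left]
    unfold bf
    rw [if_neg (by omega)]
    have h1 : n + 1 + 1 - (j : ℕ) = (n + 1 - (j : ℕ)) + 1 := by omega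
    rw [h1, Finset.sum_range_succ]
    have h2 : n + 1 - (j : ℕ) = (n - (j : ℕ)) + 1 := by omega
    rw [h2, pow_succ]
    ring

lemma Em_mul_Bm (n : ℕ) (y : R) : Em n y * Bm n y = Cm n y := by
  ext i j
  have hi := i.isLt
  have hj := j.isLt
  rw [Matrix.mul_apply]
  unfold Em Bm Cm
  simp only [Matrix.of_apply]
  rw [Fin.sum_univ_eq_sum_range (fun k => ef n y (i : ℕ) k * bf n y k (j : ℕ)) (n + 1)]
  rcases Nat.lt_or_ge (i : ℕ) n with hin | hin
  · have step : ∀ k ∈ range (n + 1), ef n y (i : ℕ) k * bf n y k (j : ℕ)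
        = if k = (i : ℕ) then bf n y k (j : ℕ) else 0 := by
      intro k _
      unfold ef
      split_ifs <;> first | ring1 | (exfalso; omega)
    rw [Finset.sum_congr rfl step,
        Finset.sum_ite_eq' (range (n + 1)) (i : ℕ) (fun k => bf n y k (j : ℕ)),
        if_pos (Finset.mem_range.mpr hi)]
    unfold bf cf
    rw [if_pos hin, if_pos hin]
  · have hieq : (i : ℕ) = n := by omega
    rcases Nat.eq_zero_or_pos (j : ℕ) with hj0 | hj0
    · have step : ∀ k ∈ range (n + 1), ef n y (i : ℕ) k * bf n y k (j : ℕ)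
          = if k = n then bf n y k (j : ℕ) else 0 := by
        intro k hk
        rw [Finset.mem_range] at hk
        unfold ef bf
        split_ifs <;> first | ring1 | (exfalso; omega)
      rw [Finset.sum_congr rfl step,
          Finset.sum_ite_eq' (range (n + 1)) n (fun k => bf n y k (j : ℕ)),
          if_pos (Finset.self_mem_range_succ n)]
      unfold bf cf
      rw [if_neg (lt_irrefl n), if_neg (by omega), if_pos hj0, hj0]
      norm_num
    · have step : ∀ k ∈ range (n + 1), ef n y (i : ℕ) k * bf n y k (j : ℕ)
          = (if k = n then bf n y k (j : ℕ) else 0)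
            + (if k = (j : ℕ) - 1 then -(∑ m ∈ range (n + 1 - k), y ^ m) else 0) := by
        intro k hk
        rw [Finset.mem_range] at hk
        unfold ef bf
        split_ifs <;> first | ring1 | (exfalso; omega) | (subst_vars; first | ring1 | (exfalso; omega))
      rw [Finset.sum_congr rfl step, Finset.sum_add_distrib,
          Finset.sum_ite_eq' (range (n + 1)) n (fun k => bf n y k (j : ℕ)),
          Finset.sum_ite_eq' (range (n + 1)) ((j : ℕ) - 1)
            (fun k => -(∑ m ∈ range (n + 1 - k), y ^ m)),
          if_pos (Finset.self_mem_range_succ n), if_pos (Finset.mem_range.mpr (by omega))]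
      unfold bf cf
      rw [if_neg (lt_irrefl n), if_neg (by omega), if_neg (by omega)]
      have h1 : n + 1 - ((j : ℕ) - 1) = n + 1 + 1 - (j : ℕ) := by omega
      rw [h1]
      ring

lemma Cm_mul_Pc (n : ℕ) (y : R) : Cm n y * Pc n = Dl n y := by
  ext i j
  have hi := i.isLt
  have hj := j.isLt
  rw [Matrix.mul_apply]
  unfold Cm Pc Dl
  simp only [Matrix.of_apply, Matrix.diagonal_apply]
  rw [Fin.sum_univ_eq_sum_range (fun k => cf n y (i : ℕ) k * pcf n k (j : ℕ)) (n + 1)]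
  have step : ∀ k ∈ range (n + 1), cf n y (i : ℕ) k * pcf n k (j : ℕ)
      = if k = ((j : ℕ) + 1) % (n + 1) then cf n y (i : ℕ) k else 0 := by
    intro k _
    unfold pcf
    split_ifs <;> ring1
  rw [Finset.sum_congr rfl step,
      Finset.sum_ite_eq' (range (n + 1)) (((j : ℕ) + 1) % (n + 1)) (fun k => cf n y (i : ℕ) k),
      if_pos (Finset.mem_range.mpr (Nat.mod_lt _ (Nat.succ_pos n)))]
  have hij : i = j ↔ (i : ℕ) = (j : ℕ) := Fin.ext_iff
  rcases eq_or_ne (j : ℕ) n with hjn | hjn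
  · have hm : ((j : ℕ) + 1) % (n + 1) = 0 := by rw [hjn]; exact Nat.mod_self _
    rw [hm]
    unfold cf
    by_cases he : i = j
    · rw [if_pos he]
      have hv : (i : ℕ) = (j : ℕ) := hij.mp he
      split_ifs <;> first | rfl | ring1 | (exfalso; first | assumption | omega)
    · rw [if_neg he]
      have hv : ¬ (i : ℕ) = (j : ℕ) := fun h => he (hij.mpr h)
      split_ifs <;> first | rfl | ring1 | (exfalso; first | assumption | omega)
  · have hm : ((j : ℕ) + 1) % (n + 1) = (j : ℕ) + 1 := Nat.mod_eq_of_lt (by omega)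
    rw [hm]
    unfold cf
    by_cases he : i = j
    · rw [if_pos he]
      have hv : (i : ℕ) = (j : ℕ) := hij.mp he
      split_ifs <;> first | rfl | ring1 | (exfalso; first | assumption | omega)
    · rw [if_neg he]
      have hv : ¬ (i : ℕ) = (j : ℕ) := fun h => he (hij.mpr h)
      split_ifs <;> first | rfl | ring1 | (exfalso; first | assumption | omega)

lemma det_P0 (n : ℕ) : (P0 n : Matrix (Fin (n + 1)) (Fin (n + 1)) R).det = 1 := by
  rw [Matrix.det_of_upperTriangular (M := P0 n)]
  · unfold P0 p0f
    simp
  · intro i j hlt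
    have h : (j : ℕ) < (i : ℕ) := hlt
    unfold P0 p0f
    simp only [Matrix.of_apply]
    rw [if_neg (by omega), if_neg (by omega)]

lemma det_Em (n : ℕ) (y : R) : (Em n y).det = 1 := by
  rw [Matrix.det_of_lowerTriangular (Em n y)]
  · unfold Em ef
    simp
  · intro i j hlt
    have h : (i : ℕ) < (j : ℕ) := hlt
    unfold Em ef
    simp only [Matrix.of_apply]
    rw [if_neg (by omega), if_neg (by rintro ⟨h1, h2⟩; omega)]

lemma det_Qm (n : ℕ) (y : R) : (Qm n y).det = 1 := by
  rw [Matrix.det_of_lowerTriangular (Qm n y)]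
  · unfold Qm qf
    simp
  · intro i j hlt
    have h : (i : ℕ) < (j : ℕ) := hlt
    unfold Qm qf
    simp only [Matrix.of_apply]
    rw [if_neg (by omega)]

lemma det_Sm (n : ℕ) (c : R) : (Sm n c).det = c := by
  unfold Sm
  rw [Matrix.det_diagonal, Fin.prod_univ_succ]
  simp

lemma det_Dm (n : ℕ) (u : ℕ → Rˣ) :
    (Dm n u : Matrix (Fin (n + 1)) (Fin (n + 1)) R).det
      = ((∏ i : Fin (n + 1), vv u (i : ℕ) : Rˣ) : R) := by
  unfold Dm
  rw [Matrix.det_diagonal]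
  exact (map_prod (Units.coeHom R) (fun i : Fin (n + 1) => vv u (i : ℕ)) Finset.univ).symm

lemma det_Dm' (n : ℕ) (u : ℕ → Rˣ) :
    (Dm' n u : Matrix (Fin (n + 1)) (Fin (n + 1)) R).det
      = (((∏ i : Fin (n + 1), vv u (i : ℕ) : Rˣ)⁻¹ : Rˣ) : R) := by
  unfold Dm'
  rw [Matrix.det_diagonal, ← Finset.prod_inv_distrib]
  exact (map_prod (Units.coeHom R) (fun i : Fin (n + 1) => (vv u (i : ℕ))⁻¹) Finset.univ).symm

lemma det_Fm (n : ℕ) (u : ℕ → Rˣ) :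
    (Fm n u : Matrix (Fin (n + 1)) (Fin (n + 1)) R).det = 1 := by
  unfold Fm
  rw [Matrix.det_diagonal, Fin.prod_univ_castSucc]
  have h1 : ∀ i : Fin n, ((i.castSucc : ℕ)) < n := fun i => i.isLt
  have h2 : ¬ ((Fin.last n : ℕ) < n) := by simp
  rw [if_neg h2]
  have h3 : (∏ i : Fin n, if ((i.castSucc : ℕ)) < n then (u ((i.castSucc : ℕ) + 1) : R)
      else (((vv u n)⁻¹ : Rˣ) : R)) = ∏ i : Fin n, (u ((i : ℕ) + 1) : R) := by
    apply Finset.prod_congr rfl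
    intro i _
    rw [if_pos (h1 i)]
    rfl
  rw [h3]
  have h5 : (∏ i : Fin n, u ((i : ℕ) + 1)) = vv u n := by
    rw [Fin.prod_univ_eq_prod_range (fun k => u (k + 1)) n]
    unfold vv
    rw [Finset.prod_Ico_eq_prod_range]
    simp only [Nat.add_sub_cancel]
    exact Finset.prod_congr rfl fun k _ => by rw [add_comm]
  have h4 : (∏ i : Fin n, (u ((i : ℕ) + 1) : R)) = ((vv u n : Rˣ) : R) := by
    rw [← h5]
    exact (map_prod (Units.coeHom R) (fun i : Fin n => u ((i : ℕ) + 1)) Finset.univ).symm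
  rw [h4, ← Units.val_mul]
  simp

lemma Pc_eq (n : ℕ) :
    (Pc n : Matrix (Fin (n + 1)) (Fin (n + 1)) R)
      = ((finRotate (n + 1))⁻¹).permMatrix R := by
  ext i j
  unfold Pc pcf
  simp only [Matrix.of_apply]
  rw [Equiv.Perm.permMatrix, PEquiv.toMatrix_apply, Equiv.toPEquiv_apply]
  have h1 : ((finRotate (n + 1) j : Fin (n + 1)) : ℕ) = ((j : ℕ) + 1) % (n + 1) := by
    rw [finRotate_succ_apply, Fin.add_def, Fin.val_one']
    conv_rhs => rw [Nat.add_mod, Nat.mod_eq_of_lt j.isLt]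
  have key : ((i : ℕ) = ((j : ℕ) + 1) % (n + 1)) ↔ ((finRotate (n + 1))⁻¹ i = j) := by
    rw [Equiv.Perm.inv_eq_iff_eq, Fin.ext_iff, h1]
  by_cases h : (finRotate (n + 1))⁻¹ i = j
  · rw [if_pos (key.mpr h), if_pos (by simp [h])]
  · rw [if_neg (fun hc => h (key.mp hc)), if_neg (by simpa using h)]

lemma det_Pc (n : ℕ) : (Pc n : Matrix (Fin (n + 1)) (Fin (n + 1)) R).det = (-1 : R) ^ n := by
  rw [Pc_eq, Matrix.det_permutation, Equiv.Perm.sign_inv, sign_finRotate]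
  push_cast
  simp

end UMDF

open UMDF

/-- **Diagonal form of the matrix `U` of Proposition `prop:matrix`.**
Let `R` be a commutative ring, `s ≥ 1`, `y ∈ R`, and `u 1, …, u (s-1)` units of `R`
with `δ = u 1 ⋯ u (s-1)`.  Let `U` be the `s×s` matrix with `1 + y` on the diagonal,
`(u_i ⋯ u_{j-1}) y` above and `(u_j ⋯ u_{i-1})⁻¹` below the diagonal.  Then there are
invertible matrices `P, Q` over `R` with `det P = (-1)^(s-1)`, `det Q = 1` and
`P * U * Q = diag(-u 1, …, -u (s-1), δ⁻¹ ∑_{j=0}^{s} y^j)`. -/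
theorem unit_matrix_diagonal_form (R : Type*) [CommRing R] (s : ℕ) (hs : 1 ≤ s)
    (y : R) (u : ℕ → Rˣ)
    (U : Matrix (Fin s) (Fin s) R)
    (hU : ∀ i j : Fin s, U i j =
      if i = j then 1 + y
      else if i.val < j.val then (((∏ k ∈ Finset.Ico (i.val + 1) (j.val + 1), u k : Rˣ)) : R) * y
      else ((((∏ k ∈ Finset.Ico (j.val + 1) (i.val + 1), u k : Rˣ))⁻¹ : Rˣ) : R)) :
    ∃ P Q : Matrix (Fin s) (Fin s) R, IsUnit P.det ∧ IsUnit Q.det ∧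
      P.det = (-1) ^ (s - 1) ∧ Q.det = 1 ∧
      P * U * Q = Matrix.diagonal (fun i : Fin s =>
        if i.val + 1 < s then (-(u (i.val + 1) : R))
        else ((((∏ k ∈ Finset.Ico 1 s, u k : Rˣ))⁻¹ : Rˣ) : R) *
          ∑ j ∈ Finset.range (s + 1), y ^ j) := by
  obtain ⟨n, rfl⟩ : ∃ n, s = n + 1 := ⟨s - 1, by omega⟩
  classical
  obtain ⟨V, hV⟩ : ∃ V : Rˣ, V = ∏ i : Fin (n + 1), vv u (i : ℕ) := ⟨_, rfl⟩
  obtain ⟨cu, hcu⟩ : ∃ cu : Rˣ, cu = (-1) ^ n * V⁻¹ := ⟨_, rfl⟩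
  have hUdec : U = Dm' n u * Mm n y * Dm n u := by
    ext i j
    rw [hU i j]
    unfold Dm Dm' Mm
    rw [Matrix.mul_diagonal, Matrix.diagonal_mul, Matrix.of_apply]
    unfold mf
    rcases Nat.lt_trichotomy (i : ℕ) (j : ℕ) with h | h | h
    · rw [if_neg (by rw [Fin.ext_iff]; omega : ¬ i = j), if_pos h,
          if_neg (by omega : ¬ (i : ℕ) = (j : ℕ)), if_pos h]
      have key : vv u (i : ℕ) * ∏ k ∈ Finset.Ico ((i : ℕ) + 1) ((j : ℕ) + 1), u k
          = vv u (j : ℕ) := by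
        unfold vv
        exact Finset.prod_Ico_consecutive u (by omega) (by omega)
      have key2 : (∏ k ∈ Finset.Ico ((i : ℕ) + 1) ((j : ℕ) + 1), u k)
          = (vv u (i : ℕ))⁻¹ * vv u (j : ℕ) := by
        rw [← key]; group
      rw [key2, Units.val_mul]
      ring
    · have hij : i = j := Fin.ext h
      subst hij
      rw [if_pos rfl, if_pos rfl]
      have hc : (((vv u (i : ℕ))⁻¹ : Rˣ) : R) * ((vv u (i : ℕ) : Rˣ) : R) = 1 := by
        rw [← Units.val_mul]; simp
      linear_combination (-(1 + y)) * hc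
    · rw [if_neg (by rw [Fin.ext_iff]; omega : ¬ i = j),
          if_neg (by omega : ¬ (i : ℕ) < (j : ℕ)),
          if_neg (by omega : ¬ (i : ℕ) = (j : ℕ)),
          if_neg (by omega : ¬ (i : ℕ) < (j : ℕ))]
      have key : vv u (j : ℕ) * ∏ k ∈ Finset.Ico ((j : ℕ) + 1) ((i : ℕ) + 1), u k
          = vv u (i : ℕ) := by
        unfold vv
        exact Finset.prod_Ico_consecutive u (by omega) (by omega)
      have key2 : ((∏ k ∈ Finset.Ico ((j : ℕ) + 1) ((i : ℕ) + 1), u k)⁻¹ : Rˣ)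
          = (vv u (i : ℕ))⁻¹ * vv u (j : ℕ) := by
        rw [← key]; group
      rw [key2, Units.val_mul]
      ring
  have hdetP : (Sm n (cu : R) * Em n y * P0 n * Dm n u).det = (-1 : R) ^ n := by
    rw [Matrix.det_mul, Matrix.det_mul, Matrix.det_mul, det_Sm, det_Em, det_P0, det_Dm, ← hV]
    have h2 : cu * V = (-1) ^ n := by rw [hcu]; group
    calc (cu : R) * 1 * 1 * (V : R) = ((cu * V : Rˣ) : R) := by rw [Units.val_mul]; ring
      _ = (((-1 : Rˣ) ^ n : Rˣ) : R) := by rw [h2]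
      _ = (-1 : R) ^ n := by rw [Units.val_pow_eq_pow_val, Units.val_neg, Units.val_one]
  have hdetQ : (Dm' n u * Qm n y * Pc n * Fm n u * Sm n ((cu⁻¹ : Rˣ) : R)).det = 1 := by
    rw [Matrix.det_mul, Matrix.det_mul, Matrix.det_mul, Matrix.det_mul, det_Dm', det_Qm,
      det_Pc, det_Fm, det_Sm, ← hV]
    have hval : (cu : R) = (-1 : R) ^ n * ((V⁻¹ : Rˣ) : R) := by
      rw [hcu, Units.val_mul, Units.val_pow_eq_pow_val, Units.val_neg, Units.val_one]
    have hc : (cu : R) * ((cu⁻¹ : Rˣ) : R) = 1 := Units.mul_inv cu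
    linear_combination hc - ((cu⁻¹ : Rˣ) : R) * hval
  refine ⟨Sm n (cu : R) * Em n y * P0 n * Dm n u,
      Dm' n u * Qm n y * Pc n * Fm n u * Sm n ((cu⁻¹ : Rˣ) : R), ?_, ?_, ?_, hdetQ, ?_⟩
  · rw [hdetP]
    exact (isUnit_one.neg).pow n
  · rw [hdetQ]
    exact isUnit_one
  · rw [hdetP]
    norm_num
  · have hDD : ∀ X : Matrix (Fin (n + 1)) (Fin (n + 1)) R,
        Dm n u * (Dm' n u * X) = X := by
      intro X
      rw [← Matrix.mul_assoc]
      have h1 : Dm n u * Dm' n u = (1 : Matrix (Fin (n + 1)) (Fin (n + 1)) R) := by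
        unfold Dm Dm'
        rw [Matrix.diagonal_mul_diagonal]
        have h0 : (fun i : Fin (n + 1) =>
            ((vv u (i : ℕ) : Rˣ) : R) * (((vv u (i : ℕ))⁻¹ : Rˣ) : R)) = fun _ => (1 : R) := by
          funext i
          exact Units.mul_inv _
        rw [h0, Matrix.diagonal_one]
      rw [h1, Matrix.one_mul]
    have hstep2 : ∀ X : Matrix (Fin (n + 1)) (Fin (n + 1)) R,
        P0 n * (Mm n y * X) = Am n y * X := fun X => by rw [← Matrix.mul_assoc, P0_mul_Mm]
    have hstep3 : ∀ X : Matrix (Fin (n + 1)) (Fin (n + 1)) R,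
        Am n y * (Qm n y * X) = Bm n y * X := fun X => by rw [← Matrix.mul_assoc, Am_mul_Qm]
    have hstep4 : ∀ X : Matrix (Fin (n + 1)) (Fin (n + 1)) R,
        Em n y * (Bm n y * X) = Cm n y * X := fun X => by rw [← Matrix.mul_assoc, Em_mul_Bm]
    have hstep5 : ∀ X : Matrix (Fin (n + 1)) (Fin (n + 1)) R,
        Cm n y * (Pc n * X) = Dl n y * X := fun X => by rw [← Matrix.mul_assoc, Cm_mul_Pc]
    rw [hUdec]
    simp only [Matrix.mul_assoc]
    rw [hDD, hDD, hstep2, hstep3, hstep4, hstep5]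
    unfold Sm Dl Fm
    rw [Matrix.diagonal_mul_diagonal, Matrix.diagonal_mul_diagonal,
      Matrix.diagonal_mul_diagonal]
    refine congrArg Matrix.diagonal (funext fun i => ?_)
    have hi := i.isLt
    have hc : (cu : R) * ((cu⁻¹ : Rˣ) : R) = 1 := Units.mul_inv cu
    unfold vv
    by_cases hn : (i : ℕ) < n
    · rw [if_pos (by omega : (i : ℕ) + 1 < n + 1), if_pos hn, if_pos hn]
      by_cases h0 : (i : ℕ) = 0
      · rw [if_pos h0, if_pos h0]
        linear_combination (-((u ((i : ℕ) + 1) : Rˣ) : R)) * hc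
      · rw [if_neg h0, if_neg h0]
        ring
    · rw [if_neg (by omega : ¬ (i : ℕ) + 1 < n + 1), if_neg hn, if_neg hn]
      by_cases h0 : (i : ℕ) = 0
      · rw [if_pos h0, if_pos h0]
        linear_combination ((∑ j ∈ Finset.range (n + 1 + 1), y ^ j)
          * (((∏ k ∈ Finset.Ico 1 (n + 1), u k : Rˣ)⁻¹ : Rˣ) : R)) * hc
      · rw [if_neg h0, if_neg h0]
        ring
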